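/- arXiv:2407.14419 — 3 statements merged into one kernel-verified Lean document; each statement's English description precedes it below -/
import Mathlib

section
/- The function h(z) = log(1 + ‖z‖²/2) is strictly convex on the open Euclidean ball of radius √2 in ℝ^d. -/
theorem strictConvexOn_log_one_add_half_norm_sq {d : ℕ} :
    StrictConvexOn ℝ (Metric.ball (0 : EuclideanSpace ℝ (Fin d)) (Real.sqrt 2))
      (fun z : EuclideanSpace ℝ (Fin d) => Real.log (1 + ‖z‖ ^ 2 / 2)) := by
  constructor
  · exact convex_ball 0 _
  intro x hx y hy hxy a b ha hb hab
  set v : EuclideanSpace ℝ (Fin d) := y - x with hv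
  have hvne : v ≠ 0 := sub_ne_zero.mpr (Ne.symm hxy)
  set α : ℝ := ‖v‖ ^ 2 / 2 with hα
  set β : ℝ := (inner ℝ x v : ℝ) with hβ
  set c : ℝ := 1 + ‖x‖ ^ 2 / 2 with hc
  set p : ℝ → ℝ := fun t => c + β * t + α * t ^ 2 with hp
  have hpt : ∀ t : ℝ, p t = 1 + ‖x + t • v‖ ^ 2 / 2 := by
    intro t
    have h1 : ‖x + t • v‖ ^ 2 = ‖x‖ ^ 2 + 2 * (t * (inner ℝ x v : ℝ)) + t ^ 2 * ‖v‖ ^ 2 := by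
      rw [@norm_add_sq_real, real_inner_smul_right, norm_smul]
      rw [mul_pow, Real.norm_eq_abs, sq_abs]
    rw [h1, hp, hc, hβ, hα]; ring
  have hpos : ∀ t : ℝ, 0 < p t := by
    intro t
    rw [hpt]
    positivity
  have hp' : ∀ t : ℝ, HasDerivAt p (β + 2 * α * t) t := by
    intro t
    have h1 : HasDerivAt (fun t : ℝ => c + β * t + α * t ^ 2)
        (0 + β * 1 + α * (↑2 * t ^ 1)) t :=
      (((hasDerivAt_const t c).add ((hasDerivAt_id t).const_mul β)).add
        ((hasDerivAt_pow 2 t).const_mul α))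
    convert h1 using 1
    push_cast
    ring
  set g : ℝ → ℝ := fun t => Real.log (p t) with hg
  have hg' : ∀ t : ℝ, HasDerivAt g ((β + 2 * α * t) / p t) t := fun t =>
    (hp' t).log (hpos t).ne'
  set q : ℝ → ℝ := fun t => (β + 2 * α * t) / p t with hq
  have hdg : deriv g = q := funext fun t => (hg' t).deriv
  have hnum : ∀ t : ℝ, HasDerivAt (fun t : ℝ => β + 2 * α * t) (2 * α) t := by
    intro t
    have h1 : HasDerivAt (fun t : ℝ => β + 2 * α * t) (0 + 2 * α * 1) t :=
      (hasDerivAt_const t β).add ((hasDerivAt_id t).const_mul (2 * α))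
    convert h1 using 1; ring
  have hq' : ∀ t : ℝ, HasDerivAt q
      ((2 * α * p t - (β + 2 * α * t) * (β + 2 * α * t)) / (p t) ^ 2) t := fun t =>
    (hnum t).div (hp' t) (hpos t).ne'
  -- The second derivative is positive on the interior of [0,1]
  have hmem : ∀ t : ℝ, t ∈ Set.Icc (0 : ℝ) 1 →
      x + t • v ∈ Metric.ball (0 : EuclideanSpace ℝ (Fin d)) (Real.sqrt 2) := by
    intro t ht
    have heq : x + t • v = (1 - t) • x + t • y := by
      rw [hv]; rw [smul_sub, sub_smul, one_smul]; abel
    rw [heq]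
    exact (convex_ball (0 : EuclideanSpace ℝ (Fin d)) (Real.sqrt 2)) hx hy
      (by linarith [ht.2]) ht.1 (by ring)
  have hsc : StrictConvexOn ℝ (Set.Icc (0 : ℝ) 1) g := by
    apply strictConvexOn_of_deriv2_pos (convex_Icc 0 1)
    · exact (continuous_iff_continuousAt.2 fun t =>
        (hg' t).differentiableAt.continuousAt).continuousOn
    · intro t ht
      rw [interior_Icc] at ht
      have h2 : deriv^[2] g t = (2 * α * p t - (β + 2 * α * t) * (β + 2 * α * t)) / (p t) ^ 2 := by
        show deriv (deriv g) t = _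
        rw [hdg]
        exact (hq' t).deriv
      rw [h2]
      apply div_pos _ (pow_pos (hpos t) 2)
      -- key inequality via Cauchy-Schwarz
      set w : EuclideanSpace ℝ (Fin d) := x + t • v with hw
      have hwball : w ∈ Metric.ball (0 : EuclideanSpace ℝ (Fin d)) (Real.sqrt 2) :=
        hmem t ⟨ht.1.le, ht.2.le⟩
      have hwnorm : ‖w‖ ^ 2 < 2 := by
        have h3 : ‖w‖ < Real.sqrt 2 := by
          simpa [dist_eq_norm] using hwball
        have h4 : ‖w‖ ^ 2 < Real.sqrt 2 ^ 2 := by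
          apply pow_lt_pow_left₀ h3 (norm_nonneg w)
          norm_num
        rwa [Real.sq_sqrt (by norm_num : (2:ℝ) ≥ 0)] at h4
      have hinner : β + 2 * α * t = (inner ℝ w v : ℝ) := by
        rw [hw, inner_add_left, real_inner_smul_left, hβ, hα,
          real_inner_self_eq_norm_sq]
        ring
      have hCS : |(inner ℝ w v : ℝ)| ≤ ‖w‖ * ‖v‖ := abs_real_inner_le_norm w v
      have hCS2 : (inner ℝ w v : ℝ) * (inner ℝ w v : ℝ) ≤ ‖w‖ ^ 2 * ‖v‖ ^ 2 := by
        nlinarith [abs_nonneg (inner ℝ w v : ℝ), sq_abs (inner ℝ w v : ℝ), norm_nonneg w,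
          norm_nonneg v]
      have hvpos : 0 < ‖v‖ ^ 2 := pow_pos (norm_pos_iff.mpr hvne) 2
      rw [hinner, hpt t, hα, ← hw]
      nlinarith [hwnorm, hvpos, hCS2]
  have h01 : (0 : ℝ) ∈ Set.Icc (0 : ℝ) 1 := by norm_num
  have h11 : (1 : ℝ) ∈ Set.Icc (0 : ℝ) 1 := by norm_num
  have hkey := hsc.2 h01 h11 (by norm_num) ha hb hab
  have hsm : a • (0 : ℝ) + b • (1 : ℝ) = b := by simp
  rw [hsm] at hkey
  have hg0 : g 0 = Real.log (1 + ‖x‖ ^ 2 / 2) := by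
    show Real.log (p 0) = _
    rw [hpt 0]; norm_num
  have hg1 : g 1 = Real.log (1 + ‖y‖ ^ 2 / 2) := by
    show Real.log (p 1) = _
    rw [hpt 1, one_smul, hv]
    norm_num
  have hgb : g b = Real.log (1 + ‖a • x + b • y‖ ^ 2 / 2) := by
    show Real.log (p b) = _
    rw [hpt b]
    congr 3
    rw [hv, smul_sub]
    have hab' : a = 1 - b := by linarith
    rw [hab', sub_smul, one_smul]
    abel
  rw [hg0, hg1, hgb] at hkey
  simpa [smul_eq_mul] using hkey
end

section
/- For any unit vectors x, y in ℝ^d, the vector g = (x - y)/(2 - ⟨x,y⟩) satisfies ‖g‖ ≤ 1, and the map T(x) = x - g/(1 - ⟨x,g⟩) applied to this g returns a unit vector (namely y), i.e., the spherical OT map formula preserves the sphere whenever its gradient input arises from a cost gradient between sphere points. -/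
open RealInnerProductSpace

theorem sot_map_preserves_sphere {d : ℕ}
    (x y : EuclideanSpace ℝ (Fin d)) (hx : ‖x‖ = 1) (hy : ‖y‖ = 1) :
    ‖(2 - ⟪x, y⟫)⁻¹ • (x - y)‖ ≤ 1 ∧
    (let g := (2 - ⟪x, y⟫)⁻¹ • (x - y);
     x - (1 - ⟪x, g⟫)⁻¹ • g = y ∧ ‖x - (1 - ⟪x, g⟫)⁻¹ • g‖ = 1) := by
  set s := ⟪x, y⟫ with hsdef
  have hs : |s| ≤ 1 := by
    have := abs_real_inner_le_norm x y
    simpa [hx, hy] using this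
  have hs1 : s ≤ 1 := (abs_le.mp hs).2
  have h2 : (0:ℝ) < 2 - s := by linarith
  have hxx : ⟪x, x⟫ = 1 := by
    have := real_inner_self_eq_norm_sq x
    rw [hx] at this; simpa using this
  have hyy : ⟪y, y⟫ = 1 := by
    have := real_inner_self_eq_norm_sq y
    rw [hy] at this; simpa using this
  have hnsub : ‖x - y‖^2 = 2 - 2*s := by
    rw [norm_sub_sq_real, hx, hy, ← hsdef]; ring
  have hnorm : ‖(2 - s)⁻¹ • (x - y)‖ ≤ 1 := by
    have hsq : ‖(2 - s)⁻¹ • (x - y)‖^2 ≤ 1 := by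
      rw [norm_smul, mul_pow, hnsub]
      have : |(2 - s)⁻¹| = (2 - s)⁻¹ := abs_of_pos (by positivity)
      rw [Real.norm_eq_abs, this]
      rw [inv_pow, inv_mul_le_iff₀ (by positivity)]
      nlinarith
    nlinarith [norm_nonneg ((2 - s)⁻¹ • (x - y))]
  refine ⟨hnorm, ?_, ?_⟩
  · show x - (1 - ⟪x, (2 - s)⁻¹ • (x - y)⟫)⁻¹ • ((2 - s)⁻¹ • (x - y)) = y
    have hxg : ⟪x, (2 - s)⁻¹ • (x - y)⟫ = (2 - s)⁻¹ * (1 - s) := by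
      rw [real_inner_smul_right, inner_sub_right, hxx, ← hsdef]
    rw [hxg]
    have h1 : 1 - (2 - s)⁻¹ * (1 - s) = (2 - s)⁻¹ := by
      field_simp
      ring
    rw [h1, inv_inv, smul_smul]
    rw [mul_inv_cancel₀ (ne_of_gt h2), one_smul]
    abel
  · show ‖x - (1 - ⟪x, (2 - s)⁻¹ • (x - y)⟫)⁻¹ • ((2 - s)⁻¹ • (x - y))‖ = 1
    have hxg : ⟪x, (2 - s)⁻¹ • (x - y)⟫ = (2 - s)⁻¹ * (1 - s) := by
      rw [real_inner_smul_right, inner_sub_right, hxx, ← hsdef]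
    rw [hxg]
    have h1 : 1 - (2 - s)⁻¹ * (1 - s) = (2 - s)⁻¹ := by
      field_simp
      ring
    rw [h1, inv_inv, smul_smul]
    rw [mul_inv_cancel₀ (ne_of_gt h2), one_smul]
    have : x - (x - y) = y := by abel
    rw [this, hy]
end

section
/- A function F : ℝ^n → ℝ built as an input-convex neural network — i.e., F(x) = w_L^T z_L where z_1 = σ(A_1 x + b_1) and z_{k+1} = σ(W_k z_k + A_k x + b_k) with all entries of the matrices W_k and of w_L nonnegative and σ a convex nondecreasing activation — is convex in x. -/
open Matrix

/-- The hidden layers of an input-convex neural network: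
`z₀ = σ(A₀ x + b₀)`, `z_{k+1} = σ(W_k z_k + A_{k+1} x + b_{k+1})`,
with `σ` applied componentwise. -/
noncomputable def icnnLayer (σ : ℝ → ℝ) (n m : ℕ)
    (W : ℕ → Matrix (Fin m) (Fin m) ℝ) (A : ℕ → Matrix (Fin m) (Fin n) ℝ)
    (b : ℕ → Fin m → ℝ) : ℕ → (Fin n → ℝ) → (Fin m → ℝ)
  | 0, x => fun i => σ ((A 0).mulVec x i + b 0 i)
  | (k + 1), x => fun i =>
      σ ((W k).mulVec (icnnLayer σ n m W A b k x) i + (A (k + 1)).mulVec x i + b (k + 1) i)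

lemma affine_convexOn {n m : ℕ} (M : Matrix (Fin m) (Fin n) ℝ) (i : Fin m) (c : ℝ) :
    ConvexOn ℝ Set.univ (fun x : Fin n → ℝ => M.mulVec x i + c) := by
  refine ⟨convex_univ, ?_⟩
  intro x _ y _ a b ha hb hab
  have : M.mulVec (a • x + b • y) i = a * M.mulVec x i + b * M.mulVec y i := by
    simp [Matrix.mulVec_add, Matrix.mulVec_smul, smul_eq_mul]
  simp only [smul_eq_mul]
  rw [this]
  have h : a*((M *ᵥ x) i + c) + b*((M *ᵥ y) i + c)
      = a*(M *ᵥ x) i + b*(M *ᵥ y) i + (a+b)*c := by ring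
  rw [h, hab, one_mul]

lemma comp_sigma {n : ℕ} (σ : ℝ → ℝ) (hσconv : ConvexOn ℝ Set.univ σ) (hσmono : Monotone σ)
    {f : (Fin n → ℝ) → ℝ} (hf : ConvexOn ℝ Set.univ f) :
    ConvexOn ℝ Set.univ (fun x => σ (f x)) := by
  refine ⟨convex_univ, ?_⟩
  intro x _ y _ a b ha hb hab
  calc σ (f (a • x + b • y)) ≤ σ (a * f x + b * f y) :=
        hσmono (hf.2 trivial trivial ha hb hab)
    _ ≤ a * σ (f x) + b * σ (f y) := hσconv.2 trivial trivial ha hb hab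

lemma sum_nonneg_convexOn {n : ℕ} {ι : Type*} (s : Finset ι) (c : ι → ℝ)
    (f : ι → (Fin n → ℝ) → ℝ) (hc : ∀ i ∈ s, 0 ≤ c i)
    (hf : ∀ i ∈ s, ConvexOn ℝ Set.univ (f i)) :
    ConvexOn ℝ Set.univ (fun x => ∑ i ∈ s, c i * f i x) := by
  classical
  induction s using Finset.induction with
  | empty => simpa using convexOn_const 0 convex_univ
  | insert _ _ hni ih =>
    rename_i j t
    simp only [Finset.sum_insert hni]
    exact ((hf j (Finset.mem_insert_self j t)).smul (hc j (Finset.mem_insert_self j t))).add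
      (ih (fun i hi => hc i (Finset.mem_insert_of_mem hi))
          (fun i hi => hf i (Finset.mem_insert_of_mem hi)))

lemma layer_convex (σ : ℝ → ℝ) (hσconv : ConvexOn ℝ Set.univ σ) (hσmono : Monotone σ)
    (n m : ℕ) (W : ℕ → Matrix (Fin m) (Fin m) ℝ) (A : ℕ → Matrix (Fin m) (Fin n) ℝ)
    (b : ℕ → Fin m → ℝ) (hW : ∀ k i j, 0 ≤ W k i j) :
    ∀ k i, ConvexOn ℝ Set.univ (fun x => icnnLayer σ n m W A b k x i) := by
  intro k
  induction k with
  | zero =>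
    intro i
    exact comp_sigma σ hσconv hσmono (affine_convexOn (A 0) i (b 0 i))
  | succ k ih =>
    intro i
    have heq : (fun x => icnnLayer σ n m W A b (k+1) x i)
        = fun x => σ ((∑ j, W k i j * icnnLayer σ n m W A b k x j)
            + ((A (k+1)).mulVec x i + b (k+1) i)) := by
      funext x
      simp [icnnLayer, Matrix.mulVec, dotProduct]
      ring_nf
    rw [heq]
    exact comp_sigma σ hσconv hσmono
      ((sum_nonneg_convexOn Finset.univ (fun j => W k i j) _
        (fun j _ => hW k i j) (fun j _ => ih j)).add (affine_convexOn (A (k+1)) i (b (k+1) i)))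

/-- An input-convex neural network (nonnegative hidden-to-hidden weights `W`,
nonnegative output weights `w`, convex nondecreasing activation `σ`)
is a convex function of its input. -/
theorem icnn_is_convex (σ : ℝ → ℝ) (hσconv : ConvexOn ℝ Set.univ σ) (hσmono : Monotone σ)
    (n m L : ℕ) (W : ℕ → Matrix (Fin m) (Fin m) ℝ) (A : ℕ → Matrix (Fin m) (Fin n) ℝ)
    (b : ℕ → Fin m → ℝ) (w : Fin m → ℝ)
    (hW : ∀ k i j, 0 ≤ W k i j) (hw : ∀ i, 0 ≤ w i) :
    ConvexOn ℝ Set.univ (fun x : Fin n → ℝ => ∑ i, w i * icnnLayer σ n m W A b L x i) := by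
  exact sum_nonneg_convexOn Finset.univ w _ (fun i _ => hw i)
    (fun i _ => layer_convex σ hσconv hσmono n m W A b hW L i)
end
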